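/- For N = 2, the set of stationary points of V_γ in Fourier variables y₀ = (x₁+x₂)/2, y₁ = (x₂-x₁)/2 consists of: the origin; (y₀,y₁) = (±1,0) for all γ; (y₀,y₁) = (0, ±√(1-2γ)) if and only if γ < 1/2; and the four points with 8y₀² = 3(1-2γ)-1, 8y₁² = 3-(1-2γ) if and only if γ < 1/3. In particular, for γ > 1/2 there are exactly 3 stationary points, for 1/3 < γ < 1/2 exactly 5, and for 0 < γ < 1/3 exactly 9. -/

import Mathlib

open scoped BigOperators
open Real

/-- The potential for `N = 2`: `V_γ(x₁,x₂) = Σ (x_i⁴/4 - x_i²/2) + (γ/2)(x₁-x₂)²`. -/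
noncomputable def V2 (γ : ℝ) (p : ℝ × ℝ) : ℝ :=
  (p.1 ^ 4 / 4 - p.1 ^ 2 / 2) + (p.2 ^ 4 / 4 - p.2 ^ 2 / 2) + γ / 2 * (p.1 - p.2) ^ 2

/-- The point with Fourier coordinates `(y₀, y₁)`: `x₁ = y₀ - y₁`, `x₂ = y₀ + y₁`. -/
def Fpt (y₀ y₁ : ℝ) : ℝ × ℝ := (y₀ - y₁, y₀ + y₁)

/-- The set of stationary points of `V_γ`. -/
noncomputable def S2 (γ : ℝ) : Set (ℝ × ℝ) := {p | fderiv ℝ (V2 γ) p = 0}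

open ContinuousLinearMap in
lemma hasFDeriv_V2 (γ : ℝ) (p : ℝ × ℝ) :
    HasFDerivAt (V2 γ)
      ((p.1 ^ 3 - p.1 + γ * (p.1 - p.2)) • (fst ℝ ℝ ℝ)
        + (p.2 ^ 3 - p.2 - γ * (p.1 - p.2)) • (snd ℝ ℝ ℝ)) p := by
  have h1 : HasFDerivAt (fun q : ℝ × ℝ => q.1 ^ 4 / 4 - q.1 ^ 2 / 2)
      ((p.1 ^ 3 - p.1) • (fst ℝ ℝ ℝ : ℝ × ℝ →L[ℝ] ℝ)) p := by
    have hd : HasDerivAt (fun t : ℝ => t ^ 4 / 4 - t ^ 2 / 2) (p.1 ^ 3 - p.1) p.1 := by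
      have := ((hasDerivAt_pow 4 p.1).div_const 4).sub ((hasDerivAt_pow 2 p.1).div_const 2)
      exact this.congr_deriv (by ring)
    exact hd.comp_hasFDerivAt p (hasFDerivAt_fst)
  have h2 : HasFDerivAt (fun q : ℝ × ℝ => q.2 ^ 4 / 4 - q.2 ^ 2 / 2)
      ((p.2 ^ 3 - p.2) • (snd ℝ ℝ ℝ : ℝ × ℝ →L[ℝ] ℝ)) p := by
    have hd : HasDerivAt (fun t : ℝ => t ^ 4 / 4 - t ^ 2 / 2) (p.2 ^ 3 - p.2) p.2 := by
      have := ((hasDerivAt_pow 4 p.2).div_const 4).sub ((hasDerivAt_pow 2 p.2).div_const 2)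
      exact this.congr_deriv (by ring)
    exact hd.comp_hasFDerivAt p (hasFDerivAt_snd)
  have h3 : HasFDerivAt (fun q : ℝ × ℝ => γ / 2 * (q.1 - q.2) ^ 2)
      ((γ * (p.1 - p.2)) • ((fst ℝ ℝ ℝ : ℝ × ℝ →L[ℝ] ℝ) - snd ℝ ℝ ℝ)) p := by
    have hd : HasDerivAt (fun t : ℝ => γ / 2 * t ^ 2) (γ * (p.1 - p.2)) (p.1 - p.2) := by
      have := (hasDerivAt_pow 2 (p.1 - p.2)).const_mul (γ / 2)
      exact this.congr_deriv (by ring)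
    have hg : HasFDerivAt (fun q : ℝ × ℝ => q.1 - q.2)
        ((fst ℝ ℝ ℝ : ℝ × ℝ →L[ℝ] ℝ) - snd ℝ ℝ ℝ) p := (hasFDerivAt_fst.sub hasFDerivAt_snd)
    exact hd.comp_hasFDerivAt (h₂ := fun t => γ / 2 * t ^ 2) p hg
  have := (h1.add h2).add h3
  refine this.congr_fderiv ?_
  ext v <;> simp <;> ring

open ContinuousLinearMap in
lemma mem_S2 (γ : ℝ) (p : ℝ × ℝ) :
    p ∈ S2 γ ↔ (p.1 ^ 3 - p.1 + γ * (p.1 - p.2) = 0 ∧ p.2 ^ 3 - p.2 - γ * (p.1 - p.2) = 0) := by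
  have hD := hasFDeriv_V2 γ p
  have hf : fderiv ℝ (V2 γ) p = _ := hD.fderiv
  rw [S2, Set.mem_setOf_eq, hf]
  constructor
  · intro h
    constructor
    · have := congrFun (congrArg (fun L : (ℝ × ℝ) →L[ℝ] ℝ => (L : ℝ × ℝ → ℝ)) h) (1, 0)
      simpa using this
    · have := congrFun (congrArg (fun L : (ℝ × ℝ) →L[ℝ] ℝ => (L : ℝ × ℝ → ℝ)) h) (0, 1)
      simpa using this
  · rintro ⟨h1, h2⟩
    ext v
    · simp [h1, h2]
    · simp [h1, h2]

lemma mem_S2_fourier (γ y₀ y₁ : ℝ) :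
    Fpt y₀ y₁ ∈ S2 γ ↔ (y₀ * (y₀ ^ 2 + 3 * y₁ ^ 2 - 1) = 0 ∧
      y₁ * (y₁ ^ 2 + 3 * y₀ ^ 2 - (1 - 2 * γ)) = 0) := by
  rw [mem_S2]
  simp only [Fpt]
  constructor
  · rintro ⟨h1, h2⟩
    exact ⟨by linear_combination (h1 + h2) / 2, by linear_combination (h2 - h1) / 2⟩
  · rintro ⟨h1, h2⟩
    exact ⟨by linear_combination h1 - h2, by linear_combination h1 + h2⟩

/-- The stationary equations in Fourier coordinates. -/
def Y2 (γ : ℝ) : Set (ℝ × ℝ) :=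
  {y | y.1 * (y.1 ^ 2 + 3 * y.2 ^ 2 - 1) = 0 ∧ y.2 * (y.2 ^ 2 + 3 * y.1 ^ 2 - (1 - 2 * γ)) = 0}

lemma Fpt_inj : Function.Injective (fun y : ℝ × ℝ => Fpt y.1 y.2) := by
  rintro ⟨a, b⟩ ⟨c, d⟩ h
  simp only [Fpt, Prod.mk.injEq] at h ⊢
  constructor <;> linarith [h.1, h.2]

lemma S2_eq (γ : ℝ) : S2 γ = (fun y : ℝ × ℝ => Fpt y.1 y.2) '' Y2 γ := by
  ext p
  constructor
  · intro hp
    refine ⟨((p.1 + p.2) / 2, (p.2 - p.1) / 2), ?_, ?_⟩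
    · have h : Fpt ((p.1 + p.2) / 2) ((p.2 - p.1) / 2) = p := by
        simp only [Fpt, Prod.ext_iff]; constructor <;> ring
      exact (mem_S2_fourier γ ((p.1 + p.2) / 2) ((p.2 - p.1) / 2)).mp (by rwa [h])
    · simp only [Fpt, Prod.ext_iff]; constructor <;> ring
  · rintro ⟨⟨a, b⟩, hy, rfl⟩
    exact (mem_S2_fourier γ a b).mpr hy

lemma ncard_S2 (γ : ℝ) : (S2 γ).ncard = (Y2 γ).ncard := by
  rw [S2_eq, Set.ncard_image_of_injective _ Fpt_inj]

lemma ncard3 (γ : ℝ) (hγ : 1 / 2 < γ) : (S2 γ).ncard = 3 := by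
  have hY : Y2 γ = {((0:ℝ), (0:ℝ)), (1, 0), (-1, 0)} := by
    ext ⟨a, b⟩
    simp only [Y2, Set.mem_setOf_eq, Set.mem_insert_iff, Set.mem_singleton_iff, Prod.mk.injEq]
    constructor
    · rintro ⟨h1, h2⟩
      have hb : b = 0 := by
        rcases mul_eq_zero.mp h2 with h | h
        · exact h
        · nlinarith [sq_nonneg a, sq_nonneg b]
      subst hb
      rcases mul_eq_zero.mp h1 with h | h
      · exact Or.inl ⟨h, rfl⟩
      · have : (a - 1) * (a + 1) = 0 := by linear_combination h
        rcases mul_eq_zero.mp this with h | h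
        · exact Or.inr (Or.inl ⟨by linarith, rfl⟩)
        · exact Or.inr (Or.inr ⟨by linarith, rfl⟩)
    · rintro (⟨rfl, rfl⟩ | ⟨rfl, rfl⟩ | ⟨rfl, rfl⟩) <;> norm_num
  rw [ncard_S2, hY]
  rw [Set.ncard_insert_of_notMem (by simp [Prod.ext_iff]) (Set.toFinite _),
      Set.ncard_insert_of_notMem (by simp [Prod.ext_iff]; norm_num) (Set.toFinite _),
      Set.ncard_singleton]

lemma ncard5 (γ : ℝ) (hγ : 1 / 3 < γ) (hγ2 : γ < 1 / 2) : (S2 γ).ncard = 5 := by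
  set b := Real.sqrt (1 - 2 * γ) with hbdef
  have hb : 0 < b := Real.sqrt_pos.mpr (by linarith)
  have hb2 : b ^ 2 = 1 - 2 * γ := Real.sq_sqrt (by linarith)
  have hY : Y2 γ = {((0:ℝ), b), (0, -b), (0, 0), (1, 0), (-1, 0)} := by
    ext ⟨x, y⟩
    simp only [Y2, Set.mem_setOf_eq, Set.mem_insert_iff, Set.mem_singleton_iff, Prod.mk.injEq]
    constructor
    · rintro ⟨h1, h2⟩
      rcases mul_eq_zero.mp h2 with hy | e2
      · subst hy
        rcases mul_eq_zero.mp h1 with hx | e1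
        · exact Or.inr (Or.inr (Or.inl ⟨hx, rfl⟩))
        · have : (x - 1) * (x + 1) = 0 := by linear_combination e1
          rcases mul_eq_zero.mp this with h | h
          · exact Or.inr (Or.inr (Or.inr (Or.inl ⟨by linarith, rfl⟩)))
          · exact Or.inr (Or.inr (Or.inr (Or.inr ⟨by linarith, rfl⟩)))
      · rcases mul_eq_zero.mp h1 with hx | e1
        · subst hx
          have : (y - b) * (y + b) = 0 := by linear_combination e2 - hb2
          rcases mul_eq_zero.mp this with h | h
          · exact Or.inl ⟨rfl, by linarith⟩
          · exact Or.inr (Or.inl ⟨rfl, by linarith⟩)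
        · exfalso; nlinarith [sq_nonneg x, sq_nonneg y]
    · rintro (⟨rfl, rfl⟩ | ⟨rfl, rfl⟩ | ⟨rfl, rfl⟩ | ⟨rfl, rfl⟩ | ⟨rfl, rfl⟩)
      · exact ⟨by ring, by linear_combination b * hb2⟩
      · exact ⟨by ring, by linear_combination -b * hb2⟩
      · exact ⟨by ring, by ring⟩
      · exact ⟨by ring, by ring⟩
      · exact ⟨by ring, by ring⟩
  rw [ncard_S2, hY]
  rw [Set.ncard_insert_of_notMem (by
        simp only [Set.mem_insert_iff, Set.mem_singleton_iff, Prod.mk.injEq]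
        rintro (⟨-, h⟩ | ⟨-, h⟩ | ⟨h, -⟩ | ⟨h, -⟩) <;> linarith) (Set.toFinite _),
      Set.ncard_insert_of_notMem (by
        simp only [Set.mem_insert_iff, Set.mem_singleton_iff, Prod.mk.injEq]
        rintro (⟨-, h⟩ | ⟨h, -⟩ | ⟨h, -⟩) <;> linarith) (Set.toFinite _),
      Set.ncard_insert_of_notMem (by
        simp only [Set.mem_insert_iff, Set.mem_singleton_iff, Prod.mk.injEq]
        rintro (⟨h, -⟩ | ⟨h, -⟩) <;> linarith) (Set.toFinite _),
      Set.ncard_insert_of_notMem (by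
        simp only [Set.mem_singleton_iff, Prod.mk.injEq]
        rintro ⟨h, -⟩; linarith) (Set.toFinite _),
      Set.ncard_singleton]

lemma ncard9 (γ : ℝ) (hγ0 : 0 < γ) (hγ : γ < 1 / 3) : (S2 γ).ncard = 9 := by
  set b := Real.sqrt (1 - 2 * γ) with hbdef
  set u := Real.sqrt ((2 - 6 * γ) / 8) with hudef
  set v := Real.sqrt ((2 + 2 * γ) / 8) with hvdef
  have hb : 0 < b := Real.sqrt_pos.mpr (by linarith)
  have hb2 : b ^ 2 = 1 - 2 * γ := Real.sq_sqrt (by linarith)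
  have hu : 0 < u := Real.sqrt_pos.mpr (by linarith)
  have hu2 : u ^ 2 = (2 - 6 * γ) / 8 := Real.sq_sqrt (by linarith)
  have hv : 0 < v := Real.sqrt_pos.mpr (by linarith)
  have hv2 : v ^ 2 = (2 + 2 * γ) / 8 := Real.sq_sqrt (by linarith)
  have hY : Y2 γ = {(u, v), (u, -v), (-u, v), (-u, -v), ((0:ℝ), b), (0, -b), (0, 0), (1, 0), (-1, 0)} := by
    ext ⟨x, y⟩
    simp only [Y2, Set.mem_setOf_eq, Set.mem_insert_iff, Set.mem_singleton_iff, Prod.mk.injEq]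
    constructor
    · rintro ⟨h1, h2⟩
      rcases mul_eq_zero.mp h1 with hx | e1
      · subst hx
        rcases mul_eq_zero.mp h2 with hy | e2
        · exact Or.inr (Or.inr (Or.inr (Or.inr (Or.inr (Or.inr (Or.inl ⟨rfl, hy⟩))))))
        · have : (y - b) * (y + b) = 0 := by linear_combination e2 - hb2
          rcases mul_eq_zero.mp this with h | h
          · exact Or.inr (Or.inr (Or.inr (Or.inr (Or.inl ⟨rfl, by linarith⟩))))
          · exact Or.inr (Or.inr (Or.inr (Or.inr (Or.inr (Or.inl ⟨rfl, by linarith⟩)))))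
      · rcases mul_eq_zero.mp h2 with hy | e2
        · subst hy
          have : (x - 1) * (x + 1) = 0 := by linear_combination e1
          rcases mul_eq_zero.mp this with h | h
          · exact Or.inr (Or.inr (Or.inr (Or.inr (Or.inr (Or.inr (Or.inr (Or.inl ⟨by linarith, rfl⟩)))))))
          · exact Or.inr (Or.inr (Or.inr (Or.inr (Or.inr (Or.inr (Or.inr (Or.inr ⟨by linarith, rfl⟩)))))))
        · have hxu : (x - u) * (x + u) = 0 := by linear_combination (3 * e2 - e1) / 8 - hu2
          have hyv : (y - v) * (y + v) = 0 := by linear_combination (3 * e1 - e2) / 8 - hv2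
          rcases mul_eq_zero.mp hxu with h | h <;> rcases mul_eq_zero.mp hyv with h' | h'
          · exact Or.inl ⟨by linarith, by linarith⟩
          · exact Or.inr (Or.inl ⟨by linarith, by linarith⟩)
          · exact Or.inr (Or.inr (Or.inl ⟨by linarith, by linarith⟩))
          · exact Or.inr (Or.inr (Or.inr (Or.inl ⟨by linarith, by linarith⟩)))
    · rintro (⟨rfl, rfl⟩ | ⟨rfl, rfl⟩ | ⟨rfl, rfl⟩ | ⟨rfl, rfl⟩ | ⟨rfl, rfl⟩ | ⟨rfl, rfl⟩ |
          ⟨rfl, rfl⟩ | ⟨rfl, rfl⟩ | ⟨rfl, rfl⟩)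
      · exact ⟨by linear_combination u*hu2+3*u*hv2, by linear_combination v*hv2+3*v*hu2⟩
      · exact ⟨by linear_combination u*hu2+3*u*hv2, by linear_combination -v*hv2-3*v*hu2⟩
      · exact ⟨by linear_combination -u*hu2-3*u*hv2, by linear_combination v*hv2+3*v*hu2⟩
      · exact ⟨by linear_combination -u*hu2-3*u*hv2, by linear_combination -v*hv2-3*v*hu2⟩
      · exact ⟨by ring, by linear_combination b*hb2⟩
      · exact ⟨by ring, by linear_combination -b*hb2⟩
      · exact ⟨by ring, by ring⟩
      · exact ⟨by ring, by ring⟩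
      · exact ⟨by ring, by ring⟩
  rw [ncard_S2, hY]
  rw [Set.ncard_insert_of_notMem (by
        simp only [Set.mem_insert_iff, Set.mem_singleton_iff, Prod.mk.injEq]
        rintro (⟨-, h⟩ | ⟨h, -⟩ | ⟨h, -⟩ | ⟨h, -⟩ | ⟨h, -⟩ | ⟨h, -⟩ | ⟨-, h⟩ | ⟨-, h⟩) <;> linarith) (Set.toFinite _),
      Set.ncard_insert_of_notMem (by
        simp only [Set.mem_insert_iff, Set.mem_singleton_iff, Prod.mk.injEq]
        rintro (⟨h, -⟩ | ⟨h, -⟩ | ⟨h, -⟩ | ⟨h, -⟩ | ⟨h, -⟩ | ⟨-, h⟩ | ⟨-, h⟩) <;> linarith) (Set.toFinite _),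
      Set.ncard_insert_of_notMem (by
        simp only [Set.mem_insert_iff, Set.mem_singleton_iff, Prod.mk.injEq]
        rintro (⟨-, h⟩ | ⟨h, -⟩ | ⟨h, -⟩ | ⟨h, -⟩ | ⟨-, h⟩ | ⟨-, h⟩) <;> linarith) (Set.toFinite _),
      Set.ncard_insert_of_notMem (by
        simp only [Set.mem_insert_iff, Set.mem_singleton_iff, Prod.mk.injEq]
        rintro (⟨h, -⟩ | ⟨h, -⟩ | ⟨h, -⟩ | ⟨-, h⟩ | ⟨-, h⟩) <;> linarith) (Set.toFinite _),
      Set.ncard_insert_of_notMem (by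
        simp only [Set.mem_insert_iff, Set.mem_singleton_iff, Prod.mk.injEq]
        rintro (⟨-, h⟩ | ⟨-, h⟩ | ⟨h, -⟩ | ⟨h, -⟩) <;> linarith) (Set.toFinite _),
      Set.ncard_insert_of_notMem (by
        simp only [Set.mem_insert_iff, Set.mem_singleton_iff, Prod.mk.injEq]
        rintro (⟨-, h⟩ | ⟨h, -⟩ | ⟨h, -⟩) <;> linarith) (Set.toFinite _),
      Set.ncard_insert_of_notMem (by
        simp only [Set.mem_insert_iff, Set.mem_singleton_iff, Prod.mk.injEq]
        rintro (⟨h, -⟩ | ⟨h, -⟩) <;> linarith) (Set.toFinite _),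
      Set.ncard_insert_of_notMem (by
        simp only [Set.mem_singleton_iff, Prod.mk.injEq]
        rintro ⟨h, -⟩; linarith) (Set.toFinite _),
      Set.ncard_singleton]

/-- description of the stationary points of `V_γ` for `N = 2` in Fourier
variables, and the counts 3, 5, 9 of stationary points in the respective regimes. -/
theorem stmt12 (γ : ℝ) (hγ : 0 < γ) :
    (0, 0) ∈ S2 γ ∧
    Fpt 1 0 ∈ S2 γ ∧ Fpt (-1) 0 ∈ S2 γ ∧
    ((∃ y₁ : ℝ, 0 < y₁ ∧ y₁ ^ 2 = 1 - 2 * γ ∧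
        Fpt 0 y₁ ∈ S2 γ ∧ Fpt 0 (-y₁) ∈ S2 γ) ↔ γ < 1 / 2) ∧
    ((∃ y₀ y₁ : ℝ, 0 < y₀ ∧ 0 < y₁ ∧
        8 * y₀ ^ 2 = 3 * (1 - 2 * γ) - 1 ∧ 8 * y₁ ^ 2 = 3 - (1 - 2 * γ) ∧
        Fpt y₀ y₁ ∈ S2 γ ∧ Fpt y₀ (-y₁) ∈ S2 γ ∧
        Fpt (-y₀) y₁ ∈ S2 γ ∧ Fpt (-y₀) (-y₁) ∈ S2 γ) ↔ γ < 1 / 3) ∧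
    (1 / 2 < γ → (S2 γ).ncard = 3) ∧
    (1 / 3 < γ → γ < 1 / 2 → (S2 γ).ncard = 5) ∧
    (γ < 1 / 3 → (S2 γ).ncard = 9) := by
  refine ⟨?_, ?_, ?_, ?_, ?_, fun h => ncard3 γ h, fun h h' => ncard5 γ h h',
    fun h => ncard9 γ hγ h⟩
  · have h0 : ((0:ℝ), (0:ℝ)) = Fpt 0 0 := by simp [Fpt]
    rw [h0, mem_S2_fourier]; norm_num
  · rw [mem_S2_fourier]; norm_num
  · rw [mem_S2_fourier]; norm_num
  · constructor
    · rintro ⟨y₁, hy, he, -, -⟩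
      nlinarith
    · intro h
      refine ⟨Real.sqrt (1 - 2 * γ), Real.sqrt_pos.mpr (by linarith),
        Real.sq_sqrt (by linarith), ?_, ?_⟩
      · rw [mem_S2_fourier]
        have := Real.sq_sqrt (show (0:ℝ) ≤ 1 - 2 * γ by linarith)
        constructor
        · ring
        · linear_combination Real.sqrt (1 - 2 * γ) * this
      · rw [mem_S2_fourier]
        have := Real.sq_sqrt (show (0:ℝ) ≤ 1 - 2 * γ by linarith)
        constructor
        · ring
        · linear_combination -Real.sqrt (1 - 2 * γ) * this
  · constructor
    · rintro ⟨y₀, y₁, h0, h1, he0, he1, -, -, -, -⟩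
      nlinarith
    · intro h
      set u := Real.sqrt ((2 - 6 * γ) / 8) with hudef
      set v := Real.sqrt ((2 + 2 * γ) / 8) with hvdef
      have hu : 0 < u := Real.sqrt_pos.mpr (by linarith)
      have hu2 : u ^ 2 = (2 - 6 * γ) / 8 := Real.sq_sqrt (by linarith)
      have hv : 0 < v := Real.sqrt_pos.mpr (by linarith)
      have hv2 : v ^ 2 = (2 + 2 * γ) / 8 := Real.sq_sqrt (by linarith)
      refine ⟨u, v, hu, hv, by linear_combination 8 * hu2, by linear_combination 8 * hv2,
        ?_, ?_, ?_, ?_⟩ <;> rw [mem_S2_fourier]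
      · exact ⟨by linear_combination u*hu2+3*u*hv2, by linear_combination v*hv2+3*v*hu2⟩
      · exact ⟨by linear_combination u*hu2+3*u*hv2, by linear_combination -v*hv2-3*v*hu2⟩
      · exact ⟨by linear_combination -u*hu2-3*u*hv2, by linear_combination v*hv2+3*v*hu2⟩
      · exact ⟨by linear_combination -u*hu2-3*u*hv2, by linear_combination -v*hv2-3*v*hu2⟩
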